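/- The square root of the generalized Fisher divergence, (p,q) ↦ √(GFD_ν(p,q)) = ‖s_p − s_q‖_{L²(ν)}, defines a metric on the set of strictly positive differentiable probability densities with ν-square-integrable scores, when ν has full support. -/

import Mathlib

open MeasureTheory

/-- A strictly positive, continuously differentiable probability density on `X`
with score (gradient of log-density) square-integrable with respect to `ν`. -/
structure GFDDensity (d : ℕ) (X : Set (EuclideanSpace ℝ (Fin d)))
    (ν : Measure (EuclideanSpace ℝ (Fin d))) where
  toFun : EuclideanSpace ℝ (Fin d) → ℝ
  score : EuclideanSpace ℝ (Fin d) → EuclideanSpace ℝ (Fin d)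
  pos : ∀ x ∈ X, 0 < toFun x
  contDiff : ContDiffOn ℝ 1 toFun X
  score_grad : ∀ x ∈ X, HasGradientAt (fun y => Real.log (toFun y)) (score x) x
  normalized : ∫ x in X, toFun x = 1
  score_sq_int : Integrable (fun x => ‖score x‖ ^ 2) ν

section Aux

variable {d : ℕ} {X : Set (EuclideanSpace ℝ (Fin d))}
  {ν : Measure (EuclideanSpace ℝ (Fin d))}

local notation "E" => EuclideanSpace ℝ (Fin d)

/-- On X the score equals the gradient. -/
lemma score_eq_gradient (f : GFDDensity d X ν) {x : E} (hx : x ∈ X) :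
    f.score x = gradient (fun y => Real.log (f.toFun y)) x :=
  (f.score_grad x hx).unique (f.score_grad x hx).differentiableAt.hasGradientAt

lemma score_continuousOn (hXo : IsOpen X) (f : GFDDensity d X ν) :
    ContinuousOn f.score X := by
  have hlog : ContDiffOn ℝ 1 (fun y => Real.log (f.toFun y)) X :=
    f.contDiff.log (fun x hx => (f.pos x hx).ne')
  have hfd : ContinuousOn (fderiv ℝ (fun y => Real.log (f.toFun y))) X :=
    hlog.continuousOn_fderiv_of_isOpen hXo le_rfl
  have : ContinuousOn (gradient (fun y => Real.log (f.toFun y))) X :=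
    (InnerProductSpace.toDual ℝ E).symm.continuous.comp_continuousOn hfd
  exact this.congr fun x hx => score_eq_gradient f hx

lemma compl_null (hXo : IsOpen X) [IsProbabilityMeasure ν] (hνX : ν X = 1) : ν Xᶜ = 0 := by
  rw [measure_compl hXo.measurableSet (measure_ne_top ν X), hνX, measure_univ, tsub_self]

lemma score_aesm (hXo : IsOpen X) [IsProbabilityMeasure ν] (hνX : ν X = 1)
    (f : GFDDensity d X ν) : AEStronglyMeasurable f.score ν := by
  have hm : Measurable (gradient (fun y => Real.log (f.toFun y))) :=
    (InnerProductSpace.toDual ℝ E).symm.continuous.measurable.comp (measurable_fderiv ℝ _)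
  have hind : AEStronglyMeasurable (X.indicator
      (gradient (fun y => Real.log (f.toFun y)))) ν :=
    (hm.indicator hXo.measurableSet).aestronglyMeasurable
  refine hind.congr (ae_iff.mpr (measure_mono_null ?_ (compl_null hXo hνX)))
  intro x hx
  simp only [Set.mem_setOf_eq] at hx
  by_contra hxX
  simp only [Set.mem_compl_iff, not_not] at hxX
  exact hx (by rw [Set.indicator_of_mem hxX, ← score_eq_gradient f hxX])

lemma score_memLp (hXo : IsOpen X) [IsProbabilityMeasure ν] (hνX : ν X = 1)
    (f : GFDDensity d X ν) : MemLp f.score 2 ν :=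
  (memLp_two_iff_integrable_sq_norm (score_aesm hXo hνX f)).mpr f.score_sq_int

lemma sqrt_integral_eq (u : E → E) (hu : MemLp u 2 ν) :
    Real.sqrt (∫ x, ‖u x‖ ^ 2 ∂ν) = (eLpNorm u 2 ν).toReal := by
  rw [hu.eLpNorm_eq_integral_rpow_norm two_ne_zero ENNReal.ofNat_ne_top,
    ENNReal.toReal_ofReal (by positivity)]
  have h2 : ((2:ENNReal)).toReal = (2:ℝ) := by norm_num
  have h1 : ∀ x : EuclideanSpace ℝ (Fin d), ‖u x‖ ^ ((2:ENNReal)).toReal = ‖u x‖ ^ 2 := by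
    intro x
    rw [h2, ← Real.rpow_natCast ‖u x‖ 2]
    norm_num
  simp_rw [h1, h2, Real.sqrt_eq_rpow]
  norm_num

/-- A function with zero derivative on an open connected set is constant there. -/
lemma const_of_deriv_zero (hXo : IsOpen X) (hXc : IsConnected X) {φ : E → ℝ}
    (hφ : ∀ x ∈ X, HasFDerivAt φ (0 : E →L[ℝ] ℝ) x) :
    ∀ x ∈ X, ∀ y ∈ X, φ x = φ y := by
  -- local constancy
  have hloc : ∀ y ∈ X, ∀ᶠ z in nhds y, φ z = φ y := by
    intro y hy
    obtain ⟨ε, hε, hball⟩ := Metric.isOpen_iff.mp hXo y hy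
    filter_upwards [Metric.ball_mem_nhds y hε] with z hz
    have hle := (convex_ball y ε).norm_image_sub_le_of_norm_hasFDerivWithin_le
      (f' := fun _ => (0 : E →L[ℝ] ℝ))
      (fun x hx => ((hφ x (hball hx)).hasFDerivWithinAt))
      (C := 0) (fun x _ => by simp) (Metric.mem_ball_self hε) hz
    have h0 : ‖φ z - φ y‖ ≤ 0 := by simpa using hle
    exact sub_eq_zero.mp (norm_eq_zero.mp (le_antisymm h0 (norm_nonneg _)))
  intro x₀ hx₀ y hy
  set c := φ x₀ with hc
  set U : Set E := {z | z ∈ X ∧ φ z = c} with hU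
  set V : Set E := {z | z ∈ X ∧ φ z ≠ c} with hV
  have hUo : IsOpen U := by
    rw [isOpen_iff_mem_nhds]
    rintro z ⟨hzX, hzc⟩
    filter_upwards [hloc z hzX, hXo.mem_nhds hzX] with w hw hwX
    exact ⟨hwX, hw.trans hzc⟩
  have hVo : IsOpen V := by
    rw [isOpen_iff_mem_nhds]
    rintro z ⟨hzX, hzc⟩
    filter_upwards [hloc z hzX, hXo.mem_nhds hzX] with w hw hwX
    exact ⟨hwX, hw ▸ hzc⟩
  have hsub : X ⊆ U ∪ V := fun z hz => by
    by_cases h : φ z = c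
    · exact Or.inl ⟨hz, h⟩
    · exact Or.inr ⟨hz, h⟩
  have hdisj : Disjoint U V := by
    rw [Set.disjoint_left]
    rintro z ⟨_, hz⟩ ⟨_, hz'⟩
    exact hz' hz
  have hXU : X ⊆ U :=
    hXc.isPreconnected.subset_left_of_subset_union hUo hVo hdisj hsub ⟨x₀, hx₀, hx₀, rfl⟩
  exact ((hXU hx₀).2).trans ((hXU hy).2).symm

end Aux

/-- `(p,q) ↦ √(GFD_ν(p,q)) = ‖s_p − s_q‖_{L²(ν)}` is a metric on the
set of strictly positive differentiable probability densities with
`ν`-square-integrable scores, when `ν` has full support: nonnegative, symmetric,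
zero exactly on equal densities, and satisfying the triangle inequality. -/
theorem stmt_2 {d : ℕ}
    (X : Set (EuclideanSpace ℝ (Fin d))) (hXo : IsOpen X) (hXc : IsConnected X)
    (ν : Measure (EuclideanSpace ℝ (Fin d))) [IsProbabilityMeasure ν]
    (hν_supp : ∀ U : Set (EuclideanSpace ℝ (Fin d)), IsOpen U → (U ∩ X).Nonempty → 0 < ν U)
    (hνX : ν X = 1)
    (D : GFDDensity d X ν → GFDDensity d X ν → ℝ)
    (hD : ∀ f g, D f g = Real.sqrt (∫ x, ‖f.score x - g.score x‖ ^ 2 ∂ν)) :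
    (∀ f g, 0 ≤ D f g) ∧
    (∀ f g, D f g = D g f) ∧
    (∀ f g, D f g = 0 ↔ Set.EqOn f.toFun g.toFun X) ∧
    (∀ f g h, D f h ≤ D f g + D g h) := by
  have hmem : ∀ f g : GFDDensity d X ν,
      MemLp (fun x => f.score x - g.score x) 2 ν :=
    fun f g => (score_memLp hXo hνX f).sub (score_memLp hXo hνX g)
  have hDe : ∀ f g : GFDDensity d X ν,
      D f g = (eLpNorm (fun x => f.score x - g.score x) 2 ν).toReal := by
    intro f g; rw [hD, sqrt_integral_eq _ (hmem f g)]
  refine ⟨fun f g => by rw [hD]; exact Real.sqrt_nonneg _,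
    fun f g => by simp only [hD, norm_sub_rev], ?_, ?_⟩
  · -- zero iff
    intro f g
    constructor
    · intro h0
      -- scores equal a.e.
      have hint : Integrable (fun x => ‖f.score x - g.score x‖ ^ 2) ν :=
        (memLp_two_iff_integrable_sq_norm (hmem f g).aestronglyMeasurable).mp (hmem f g)
      have hA : ∫ x, ‖f.score x - g.score x‖ ^ 2 ∂ν = 0 := by
        rw [hD] at h0
        have h1 : (0:ℝ) ≤ ∫ x, ‖f.score x - g.score x‖ ^ 2 ∂ν :=
          integral_nonneg fun x => by positivity
        have h2 := Real.sqrt_eq_zero'.mp h0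
        linarith
      have hae : ∀ᵐ x ∂ν, f.score x - g.score x = 0 := by
        have := (integral_eq_zero_iff_of_nonneg (fun x => by positivity) hint).mp hA
        filter_upwards [this] with x hx
        have : ‖f.score x - g.score x‖ = 0 := by
          have := hx
          simp only [Pi.zero_apply] at this
          nlinarith [norm_nonneg (f.score x - g.score x)]
        exact norm_eq_zero.mp this
      -- scores equal on X by continuity and full support
      have hs_cont : ContinuousOn (fun x => f.score x - g.score x) X :=
        (score_continuousOn hXo f).sub (score_continuousOn hXo g)
      have hXeq : ∀ x ∈ X, f.score x = g.score x := by
        intro y hy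
        by_contra hne
        have hsy : f.score y - g.score y ≠ 0 := sub_ne_zero.mpr hne
        have hev : ∀ᶠ z in nhdsWithin y X, f.score z - g.score z ≠ 0 :=
          (hs_cont y hy) (isOpen_compl_singleton.mem_nhds hsy)
        obtain ⟨V, hVo, hyV, hVsub⟩ := mem_nhdsWithin.mp hev
        have hpos : 0 < ν (V ∩ X) :=
          hν_supp (V ∩ X) (hVo.inter hXo) ⟨y, ⟨hyV, hy⟩, hy⟩
        have hnull : ν {x | ¬ (f.score x - g.score x = 0)} = 0 := ae_iff.mp hae
        have : ν (V ∩ X) = 0 := measure_mono_null (fun z hz => hVsub hz) hnull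
        exact absurd this hpos.ne'
      -- log f - log g has zero deriv on X
      set φ : EuclideanSpace ℝ (Fin d) → ℝ :=
        fun y => Real.log (f.toFun y) - Real.log (g.toFun y) with hφdef
      have hφ : ∀ x ∈ X, HasFDerivAt φ (0 : EuclideanSpace ℝ (Fin d) →L[ℝ] ℝ) x := by
        intro x hx
        have h1 := (f.score_grad x hx).hasFDerivAt
        have h2 := (g.score_grad x hx).hasFDerivAt
        have := h1.sub h2
        rwa [hXeq x hx, sub_self] at this
      obtain ⟨x₀, hx₀⟩ := hXc.nonempty
      have hconst := const_of_deriv_zero hXo hXc hφ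
      set c := φ x₀ with hc
      have hlog : ∀ x ∈ X, Real.log (f.toFun x) = Real.log (g.toFun x) + c := by
        intro x hx
        have h' := hconst x hx x₀ hx₀
        simp only [hφdef] at h'
        have hc' : c = Real.log (f.toFun x₀) - Real.log (g.toFun x₀) := rfl
        linarith
      have hfg : ∀ x ∈ X, f.toFun x = g.toFun x * Real.exp c := by
        intro x hx
        rw [← Real.exp_log (f.pos x hx), hlog x hx, Real.exp_add, Real.exp_log (g.pos x hx)]
      have hint1 : ∫ x in X, f.toFun x = (∫ x in X, g.toFun x) * Real.exp c := by
        rw [setIntegral_congr_fun hXo.measurableSet (fun x hx => hfg x hx)]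
        exact integral_mul_const _ _
      have hec : Real.exp c = 1 := by
        rw [f.normalized, g.normalized, one_mul] at hint1
        exact hint1.symm
      intro x hx
      rw [hfg x hx, hec, mul_one]
    · intro heq
      rw [hD]
      have hae : ∀ᵐ x ∂ν, ‖f.score x - g.score x‖ ^ 2 = 0 := by
        have hXc0 : ν Xᶜ = 0 := compl_null hXo hνX
        have : ∀ᵐ x ∂ν, x ∈ X := by
          rw [ae_iff]; exact hXc0
        filter_upwards [this] with x hx
        have hfe : (fun y => Real.log (f.toFun y)) =ᶠ[nhds x] fun y => Real.log (g.toFun y) := by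
          filter_upwards [hXo.mem_nhds hx] with z hz
          rw [heq hz]
        have h1 : HasGradientAt (fun y => Real.log (g.toFun y)) (f.score x) x :=
          hasGradientAt_iff_hasFDerivAt.mpr
            ((f.score_grad x hx).hasFDerivAt.congr_of_eventuallyEq hfe.symm)
        have := h1.unique (g.score_grad x hx)
        simp [this]
      rw [integral_congr_ae hae]
      simp
  · -- triangle
    intro f g h
    rw [hDe f h, hDe f g, hDe g h]
    have key : eLpNorm (fun x => f.score x - h.score x) 2 ν ≤
        eLpNorm (fun x => f.score x - g.score x) 2 ν +
        eLpNorm (fun x => g.score x - h.score x) 2 ν := by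
      have : (fun x => f.score x - h.score x) =
          (fun x => f.score x - g.score x) + (fun x => g.score x - h.score x) := by
        funext x; simp [Pi.add_apply]
      rw [this]
      exact eLpNorm_add_le (hmem f g).aestronglyMeasurable (hmem g h).aestronglyMeasurable
        one_le_two
    have hfin1 := (hmem f g).2.ne
    have hfin2 := (hmem g h).2.ne
    calc (eLpNorm (fun x => f.score x - h.score x) 2 ν).toReal
        ≤ (eLpNorm (fun x => f.score x - g.score x) 2 ν +
            eLpNorm (fun x => g.score x - h.score x) 2 ν).toReal :=
          ENNReal.toReal_mono (by finiteness) key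
      _ = _ := ENNReal.toReal_add hfin1 hfin2
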